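/- Assume every root of the characteristic polynomial f has modulus strictly less than 1. Then for every ε > 0 and every initial data x_0,…,x_{p−1} ∈ ℝ, lim_{t→∞} d_TV( N(x_t, ε²σ_t²), N(0, ε²σ_∞²) ) = 0; that is, the random linear recurrence converges in total variation, as t → ∞, to a Gaussian random variable with mean 0 and variance ε²σ_∞² ∈ [ε², +∞). -/

import Mathlib

open MeasureTheory ProbabilityTheory Filter Real

/-- The Gaussian distribution on ℝ with mean `m` and variance `v ≥ 0`. -/
noncomputable def gauss (m v : ℝ) : Measure ℝ := gaussianReal m v.toNNReal

/-- Total variation distance between two measures on ℝ: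
`d_TV(μ,ν) = sup_{A measurable} |μ(A) − ν(A)|`. -/
noncomputable def dTV (μ ν : Measure ℝ) : ℝ :=
  ⨆ A : {A : Set ℝ // MeasurableSet A}, |(μ A.1).toReal - (ν A.1).toReal|
/-- The inner sum Σ_{(k₁,…,k_p)∈ℕ₀^p, k₁+⋯+k_p=s} λ₁^{k₁}⋯λ_p^{k_p}. -/
noncomputable def hSum (p : ℕ) (lam : Fin p → ℂ) (s : ℕ) : ℂ :=
  ∑ k ∈ Finset.Nat.antidiagonalTuple p s, ∏ j, lam j ^ k j

/-- σ_t² = Σ_{s=0}^{t−p} ( Σ_{k₁+⋯+k_p=s} λ₁^{k₁}⋯λ_p^{k_p} )², a real number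
(each inner sum is a real number since the φ_i are real, so its square equals
the square of its modulus). -/
noncomputable def sigmaSq (p : ℕ) (lam : Fin p → ℂ) (t : ℕ) : ℝ :=
  ∑ s ∈ Finset.range (t - p + 1), ‖hSum p lam s‖ ^ 2

section Aux
open Polynomial


/-- Key analytic lemma: if `‖a‖ < 1` and `u (t+1) - a * u t → 0` then `u → 0`. -/
lemma tendsto_zero_of_shift_sub {a : ℂ} (ha : ‖a‖ < 1) {u : ℕ → ℂ}
    (h : Tendsto (fun t => u (t + 1) - a * u t) atTop (nhds 0)) :
    Tendsto u atTop (nhds 0) := by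
  have ha0 : 0 ≤ ‖a‖ := norm_nonneg a
  have h1a : 0 < 1 - ‖a‖ := by linarith
  rw [Metric.tendsto_atTop] at h ⊢
  intro ε hε
  set δ : ℝ := ε * (1 - ‖a‖) / 4 with hδdef
  have hδ : 0 < δ := by positivity
  obtain ⟨T, hT⟩ := h δ hδ
  have hW : ∀ t, T ≤ t → ‖u (t + 1) - a * u t‖ ≤ δ := by
    intro t ht
    have := hT t ht
    rw [dist_zero_right] at this
    exact this.le
  set D : ℝ := δ / (1 - ‖a‖) with hDdef
  have hD : 0 < D := by positivity
  have hDeq : ‖a‖ * D + δ = D := by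
    have hDδ : D * (1 - ‖a‖) = δ := by
      rw [hDdef, div_mul_cancel₀ _ h1a.ne']
    linear_combination -hDδ
  have key : ∀ n, ‖u (T + n)‖ ≤ ‖a‖ ^ n * ‖u T‖ + D := by
    intro n
    induction n with
    | zero => simp only [Nat.add_zero, pow_zero, one_mul]; exact le_add_of_nonneg_right hD.le
    | succ n ih =>
      have h1 : ‖u (T + n + 1)‖ ≤ ‖a‖ * ‖u (T + n)‖ + δ := by
        calc ‖u (T + n + 1)‖ = ‖(u (T + n + 1) - a * u (T + n)) + a * u (T + n)‖ := by
              congr 1; ring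
          _ ≤ ‖u (T + n + 1) - a * u (T + n)‖ + ‖a * u (T + n)‖ := norm_add_le _ _
          _ ≤ δ + ‖a‖ * ‖u (T + n)‖ := by
              rw [norm_mul]
              exact add_le_add (hW _ (Nat.le_add_right _ _)) le_rfl
          _ = ‖a‖ * ‖u (T + n)‖ + δ := by ring
      have h2 : ‖a‖ * ‖u (T + n)‖ + δ ≤ ‖a‖ * (‖a‖ ^ n * ‖u T‖ + D) + δ := by
        have := mul_le_mul_of_nonneg_left ih ha0
        linarith
      have h3 : ‖a‖ * (‖a‖ ^ n * ‖u T‖ + D) + δ = ‖a‖ ^ (n + 1) * ‖u T‖ + (‖a‖ * D + δ) := by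
        ring
      have : ‖u (T + (n + 1))‖ ≤ ‖a‖ ^ (n + 1) * ‖u T‖ + D := by
        rw [← hDeq]
        calc ‖u (T + (n + 1))‖ = ‖u (T + n + 1)‖ := rfl
          _ ≤ ‖a‖ * ‖u (T + n)‖ + δ := h1
          _ ≤ ‖a‖ * (‖a‖ ^ n * ‖u T‖ + D) + δ := h2
          _ = ‖a‖ ^ (n + 1) * ‖u T‖ + (‖a‖ * D + δ) := h3
      exact this
  have hpow : Tendsto (fun n => ‖a‖ ^ n * ‖u T‖) atTop (nhds 0) := by
    simpa using (tendsto_pow_atTop_nhds_zero_of_lt_one ha0 ha).mul_const ‖u T‖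
  have hDlt : D < ε / 2 := by
    rw [hDdef, hδdef]
    rw [div_lt_iff₀ h1a]
    nlinarith
  obtain ⟨N, hN⟩ := (Metric.tendsto_atTop.mp hpow) (ε / 2) (by positivity)
  refine ⟨T + N, fun t ht => ?_⟩
  have hTt : T ≤ t := le_trans (Nat.le_add_right _ _) ht
  have h4 : ‖u t‖ ≤ ‖a‖ ^ (t - T) * ‖u T‖ + D := by
    have := key (t - T)
    rwa [Nat.add_sub_cancel' hTt] at this
  have h5 : ‖a‖ ^ (t - T) * ‖u T‖ < ε / 2 := by
    have := hN (t - T) (by omega)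
    rw [dist_zero_right] at this
    exact lt_of_abs_lt this
  rw [dist_zero_right]
  linarith

noncomputable def shiftE : Module.End ℂ (ℕ → ℂ) :=
{ toFun := fun u t => u (t + 1), map_add' := fun _ _ => rfl, map_smul' := fun _ _ => rfl }

lemma shiftE_pow (n : ℕ) (u : ℕ → ℂ) (t : ℕ) : (shiftE ^ n) u t = u (t + n) := by
  induction n generalizing u t with
  | zero => simp
  | succ n ih =>
    rw [pow_succ, Module.End.mul_apply, ih]
    rfl

lemma aeval_X_sub_C_apply (a : ℂ) (u : ℕ → ℂ) (t : ℕ) :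
    (Polynomial.aeval shiftE (X - C a)) u t = u (t + 1) - a * u t := by
  simp only [map_sub, Polynomial.aeval_X, Polynomial.aeval_C, LinearMap.sub_apply,
    Pi.sub_apply, Module.algebraMap_end_apply, Pi.smul_apply, smul_eq_mul]
  rfl

/-- Peeling lemma. -/
lemma tendsto_zero_of_aeval_prod : ∀ L : List ℂ, (∀ a ∈ L, ‖a‖ < 1) → ∀ u : ℕ → ℂ,
    (Polynomial.aeval shiftE (L.map (fun a => X - C a)).prod) u = 0 →
    Tendsto u atTop (nhds 0) := by
  intro L
  induction L with
  | nil =>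
    intro _ u hu
    simp only [List.map_nil, List.prod_nil, map_one, Module.End.one_apply] at hu
    rw [hu]
    exact tendsto_const_nhds
  | cons a L ih =>
    intro hlt u hu
    have ha : ‖a‖ < 1 := hlt a List.mem_cons_self
    have hL : ∀ b ∈ L, ‖b‖ < 1 := fun b hb => hlt b (List.mem_cons_of_mem a hb)
    rw [List.map_cons, List.prod_cons, mul_comm, map_mul, Module.End.mul_apply] at hu
    have hw := ih hL _ hu
    apply tendsto_zero_of_shift_sub ha
    have : (fun t => u (t + 1) - a * u t) = (Polynomial.aeval shiftE (X - C a)) u := by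
      funext t
      rw [aeval_X_sub_C_apply]
    rw [this]
    exact hw

lemma x_tendsto_zero (p : ℕ) (hp : 0 < p) (φ : Fin p → ℝ) (lam : Fin p → ℂ)
    (hroots : ∀ z : ℂ,
      z ^ p - ∑ i : Fin p, (φ i : ℂ) * z ^ (p - 1 - i.val) = ∏ j, (z - lam j))
    (hH : ∀ j, ‖lam j‖ < 1)
    (x : ℕ → ℝ)
    (hrec : ∀ t : ℕ, x (t + p) = ∑ i : Fin p, φ i * x (t + p - 1 - i.val)) :
    Tendsto x atTop (nhds 0) := by
  set x' : ℕ → ℂ := fun t => (x t : ℂ) with hx'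
  set P : Polynomial ℂ := X ^ p - ∑ i : Fin p, C (φ i : ℂ) * X ^ (p - 1 - i.val) with hP
  have hPeq : P = ∏ j, (X - C (lam j)) := by
    apply Polynomial.funext
    intro z
    rw [Polynomial.eval_prod]
    simp only [hP, eval_sub, eval_pow, eval_X, eval_finset_sum, eval_mul, eval_C]
    exact hroots z
  have hPx : (Polynomial.aeval shiftE P) x' = 0 := by
    funext t
    simp only [hP, map_sub, map_pow, Polynomial.aeval_X, map_sum, map_mul, Polynomial.aeval_C,
      LinearMap.sub_apply, Pi.sub_apply, LinearMap.sum_apply, Finset.sum_apply,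
      Module.End.mul_apply, Module.algebraMap_end_apply, Pi.smul_apply, smul_eq_mul]
    rw [shiftE_pow]
    have hidx : ∀ i : Fin p, t + p - 1 - i.val = t + (p - 1 - i.val) := by
      intro i; omega
    have : ∀ i : Fin p, ((shiftE ^ (p - 1 - i.val)) x') t = (x (t + p - 1 - i.val) : ℂ) := by
      intro i; rw [shiftE_pow, hidx i]
    have hsum : ∑ i : Fin p, (φ i : ℂ) * ((shiftE ^ (p - 1 - i.val)) x') t
        = ∑ i : Fin p, (φ i : ℂ) * (x (t + p - 1 - i.val) : ℂ) := by
      refine Finset.sum_congr rfl fun i _ => ?_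
      rw [this i]
    rw [hsum]
    have := hrec t
    rw [Pi.zero_apply, sub_eq_zero]
    simp only [hx']
    rw [this]
    push_cast
    rfl
  have hcx : Tendsto x' atTop (nhds 0) := by
    apply tendsto_zero_of_aeval_prod (List.ofFn lam)
    · intro a haL
      obtain ⟨j, rfl⟩ := List.mem_ofFn.mp haL
      exact hH j
    · have : ((List.ofFn lam).map (fun a => X - C a)).prod = ∏ j, (X - C (lam j)) := by
        rw [List.map_ofFn, List.prod_ofFn]
        rfl
      rw [this, ← hPeq]
      exact hPx
  have : Tendsto (fun t => ‖x' t‖) atTop (nhds 0) := by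
    simpa using hcx.norm
  rw [tendsto_zero_iff_norm_tendsto_zero]
  simpa [hx', Complex.norm_real] using this

end Aux

/-- TV distance bounded by L1 distance of densities. -/
lemma dTV_le_L1 (m₁ m₂ v₁ v₂ : ℝ) (hv₁ : 0 < v₁) (hv₂ : 0 < v₂) :
    dTV (gauss m₁ v₁) (gauss m₂ v₂) ≤
      ∫ y, |gaussianPDFReal m₁ v₁.toNNReal y - gaussianPDFReal m₂ v₂.toNNReal y| := by
  have hn₁ : v₁.toNNReal ≠ 0 := fun h => absurd (Real.toNNReal_pos.mpr hv₁) (by simp [h])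
  have hn₂ : v₂.toNNReal ≠ 0 := fun h => absurd (Real.toNNReal_pos.mpr hv₂) (by simp [h])
  have hint₁ := integrable_gaussianPDFReal m₁ v₁.toNNReal
  have hint₂ := integrable_gaussianPDFReal m₂ v₂.toNNReal
  haveI : Nonempty {A : Set ℝ // MeasurableSet A} := ⟨⟨∅, MeasurableSet.empty⟩⟩
  apply ciSup_le
  rintro ⟨A, hA⟩
  have h₁ : ((gauss m₁ v₁) A).toReal = ∫ y in A, gaussianPDFReal m₁ v₁.toNNReal y := by
    rw [gauss, gaussianReal_apply_eq_integral _ hn₁, ENNReal.toReal_ofReal]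
    exact integral_nonneg fun y => gaussianPDFReal_nonneg _ _ _
  have h₂ : ((gauss m₂ v₂) A).toReal = ∫ y in A, gaussianPDFReal m₂ v₂.toNNReal y := by
    rw [gauss, gaussianReal_apply_eq_integral _ hn₂, ENNReal.toReal_ofReal]
    exact integral_nonneg fun y => gaussianPDFReal_nonneg _ _ _
  rw [h₁, h₂, ← integral_sub hint₁.restrict hint₂.restrict]
  calc |∫ y in A, (gaussianPDFReal m₁ v₁.toNNReal y - gaussianPDFReal m₂ v₂.toNNReal y)|
      ≤ ∫ y in A, |gaussianPDFReal m₁ v₁.toNNReal y - gaussianPDFReal m₂ v₂.toNNReal y| := by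
        simpa [Real.norm_eq_abs] using
          norm_integral_le_integral_norm
            (μ := volume.restrict A)
            (fun y => gaussianPDFReal m₁ v₁.toNNReal y - gaussianPDFReal m₂ v₂.toNNReal y)
    _ ≤ ∫ y, |gaussianPDFReal m₁ v₁.toNNReal y - gaussianPDFReal m₂ v₂.toNNReal y| := by
        apply setIntegral_le_integral ((hint₁.sub hint₂).abs)
        exact ae_of_all _ fun y => abs_nonneg _

lemma dTV_nonneg (μ ν : Measure ℝ) : 0 ≤ dTV μ ν :=
  Real.iSup_nonneg fun A => abs_nonneg _

/-- Pointwise convergence of Gaussian pdfs. -/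
lemma pdf_tendsto {m : ℕ → ℝ} {v : ℕ → ℝ} {V : ℝ} (hV : 0 < V)
    (hvpos : ∀ t, 0 < v t)
    (hm : Tendsto m atTop (nhds 0)) (hv : Tendsto v atTop (nhds V)) (y : ℝ) :
    Tendsto (fun t => gaussianPDFReal (m t) (v t).toNNReal y) atTop
      (nhds (gaussianPDFReal 0 V.toNNReal y)) := by
  have hco : ∀ t, (((v t).toNNReal : ℝ)) = v t := fun t => Real.coe_toNNReal _ (hvpos t).le
  have hcoV : ((V.toNNReal : ℝ)) = V := Real.coe_toNNReal _ hV.le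
  simp only [gaussianPDFReal, hco, hcoV]
  have h2v : Tendsto (fun t => 2 * π * v t) atTop (nhds (2 * π * V)) := hv.const_mul _
  have hsq : Tendsto (fun t => √(2 * π * v t)) atTop (nhds (√(2 * π * V))) :=
    (Real.continuous_sqrt.tendsto _).comp h2v
  have hsqne : √(2 * π * V) ≠ 0 := by
    refine (Real.sqrt_pos.mpr ?_).ne'
    positivity
  refine Tendsto.mul (hsq.inv₀ hsqne) ?_
  refine (Real.continuous_exp.tendsto _).comp ?_
  refine Tendsto.div ?_ (hv.const_mul _) (by positivity)
  exact (((tendsto_const_nhds.sub hm).pow 2)).neg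

/-- Domination of Gaussian pdfs. -/
lemma pdf_bound {m v V : ℝ} (hV : 0 < V) (hm : |m| ≤ 1) (hv1 : V / 2 ≤ v) (hv2 : v ≤ 2 * V)
    (y : ℝ) :
    gaussianPDFReal m v.toNNReal y ≤
      (√(π * V))⁻¹ * rexp (1 / (4 * V)) * rexp (-(1 / (8 * V)) * y ^ 2) := by
  have hvpos : 0 < v := lt_of_lt_of_le (by positivity) hv1
  have hco : ((v.toNNReal : ℝ)) = v := Real.coe_toNNReal _ hvpos.le
  rw [gaussianPDFReal, hco]
  have h1 : (√(2 * π * v))⁻¹ ≤ (√(π * V))⁻¹ := by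
    apply inv_anti₀ (Real.sqrt_pos.mpr (by positivity))
    apply Real.sqrt_le_sqrt
    nlinarith [pi_pos]
  have h2 : rexp (-(y - m) ^ 2 / (2 * v)) ≤ rexp (1 / (4 * V)) * rexp (-(1 / (8 * V)) * y ^ 2) := by
    rw [← Real.exp_add]
    apply Real.exp_le_exp.mpr
    have hA : (0:ℝ) ≤ (y - m) ^ 2 := sq_nonneg _
    have step1 : -(y - m) ^ 2 / (2 * v) ≤ -(y - m) ^ 2 / (4 * V) := by
      rw [neg_div, neg_div, neg_le_neg_iff]
      apply div_le_div_of_nonneg_left hA (by positivity)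
      linarith
    have hm2 : m ^ 2 ≤ 1 := by nlinarith [abs_nonneg m, sq_abs m]
    have step2 : -(y - m) ^ 2 / (4 * V) ≤ (1 - y ^ 2 / 2) / (4 * V) := by
      apply div_le_div_of_nonneg_right ?_ (by positivity)
      nlinarith [sq_nonneg (y - 2 * m)]
    have step3 : (1 - y ^ 2 / 2) / (4 * V) = 1 / (4 * V) + -(1 / (8 * V)) * y ^ 2 := by
      field_simp
      ring
    linarith [step1, step2, step3.le]
  calc (√(2 * π * v))⁻¹ * rexp (-(y - m) ^ 2 / (2 * v))
      ≤ (√(π * V))⁻¹ * (rexp (1 / (4 * V)) * rexp (-(1 / (8 * V)) * y ^ 2)) := by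
        apply mul_le_mul h1 h2 (Real.exp_pos _).le (by positivity)
    _ = (√(π * V))⁻¹ * rexp (1 / (4 * V)) * rexp (-(1 / (8 * V)) * y ^ 2) := by ring

lemma one_le_sigmaSq (p : ℕ) (lam : Fin p → ℂ) (t : ℕ) : 1 ≤ sigmaSq p lam t := by
  have h0 : hSum p lam 0 = 1 := by
    rw [hSum, Finset.Nat.antidiagonalTuple_zero_right, Finset.sum_singleton]
    simp
  have h1 : (1:ℝ) = ‖hSum p lam 0‖ ^ 2 := by rw [h0]; simp
  rw [h1, sigmaSq]
  exact Finset.single_le_sum (f := fun s => ‖hSum p lam s‖ ^ 2)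
    (fun i _ => by positivity) (Finset.mem_range.mpr (Nat.succ_pos _))


/-- Strong ergodicity: under hypothesis (H) (every root of the characteristic
polynomial has modulus < 1), for every ε > 0 and every initial data, the law
N(x_t, ε²σ_t²) of the random linear recurrence converges in total variation, as
t → ∞, to the Gaussian N(0, ε²σ_∞²), whose variance ε²σ_∞² lies in [ε², +∞). -/
theorem ergodic_convergence_in_tv (p : ℕ) (hp : 0 < p) (φ : Fin p → ℝ)
    (hφ : φ ⟨p - 1, by omega⟩ ≠ 0) (lam : Fin p → ℂ)
    (hroots : ∀ z : ℂ,
      z ^ p - ∑ i : Fin p, (φ i : ℂ) * z ^ (p - 1 - i.val) = ∏ j, (z - lam j))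
    (hH : ∀ j, ‖lam j‖ < 1)
    (x : ℕ → ℝ)
    (hrec : ∀ t : ℕ, x (t + p) = ∑ i : Fin p, φ i * x (t + p - 1 - i.val))
    (ε : ℝ) (hε : 0 < ε)
    (σinf : ℝ) (hσinf : Tendsto (fun t => sigmaSq p lam t) atTop (nhds σinf)) :
    ε ^ 2 ≤ ε ^ 2 * σinf ∧
    Tendsto
      (fun t : ℕ => dTV (gauss (x t) (ε ^ 2 * sigmaSq p lam t)) (gauss 0 (ε ^ 2 * σinf)))
      atTop (nhds 0) := by
  have hσinf1 : 1 ≤ σinf := ge_of_tendsto' hσinf fun t => one_le_sigmaSq p lam t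
  have hε2 : (0:ℝ) < ε ^ 2 := by positivity
  constructor
  · nlinarith
  set V : ℝ := ε ^ 2 * σinf with hVdef
  have hVpos : 0 < V := by nlinarith
  set v : ℕ → ℝ := fun t => ε ^ 2 * sigmaSq p lam t with hvdef
  have hvpos : ∀ t, 0 < v t := fun t => by
    have := one_le_sigmaSq p lam t
    simp only [hvdef]
    nlinarith
  have hvV : Tendsto v atTop (nhds V) := hσinf.const_mul _
  have hx0 : Tendsto x atTop (nhds 0) := x_tendsto_zero p hp φ lam hroots hH x hrec
  set g : ℝ → ℝ := gaussianPDFReal 0 V.toNNReal with hgdef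
  set C : ℝ := (√(π * V))⁻¹ * rexp (1 / (4 * V)) with hCdef
  have hL1 : Tendsto
      (fun t => ∫ y, |gaussianPDFReal (x t) (v t).toNNReal y - g y|) atTop (nhds 0) := by
    have key := tendsto_integral_filter_of_dominated_convergence
      (μ := (volume : Measure ℝ)) (l := atTop)
      (F := fun t y => |gaussianPDFReal (x t) (v t).toNNReal y - g y|)
      (f := fun _ => (0:ℝ))
      (bound := fun y => C * rexp (-(1 / (8 * V)) * y ^ 2) + g y)
      ?_ ?_ ?_ ?_
    · simpa using key
    · refine Eventually.of_forall fun t => ?_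
      exact (((measurable_gaussianPDFReal _ _).sub (measurable_gaussianPDFReal _ _)).abs).aestronglyMeasurable
    · have h1 : ∀ᶠ t in atTop, |x t| ≤ 1 := by
        have := hx0 (Metric.closedBall_mem_nhds (0:ℝ) one_pos)
        simpa [Metric.closedBall, Real.dist_eq, Set.preimage, Filter.eventually_iff] using this
      have h2 : ∀ᶠ t in atTop, v t ∈ Set.Icc (V / 2) (2 * V) := by
        refine hvV (Icc_mem_nhds ?_ ?_) <;> linarith
      filter_upwards [h1, h2] with t ht1 ht2
      refine ae_of_all _ fun y => ?_
      have hf := pdf_bound hVpos ht1 ht2.1 ht2.2 y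
      have hfn : 0 ≤ gaussianPDFReal (x t) (v t).toNNReal y := gaussianPDFReal_nonneg _ _ _
      have hgn : 0 ≤ g y := gaussianPDFReal_nonneg _ _ _
      rw [Real.norm_eq_abs, abs_abs]
      calc |gaussianPDFReal (x t) (v t).toNNReal y - g y|
          ≤ |gaussianPDFReal (x t) (v t).toNNReal y| + |g y| := abs_sub _ _
        _ = gaussianPDFReal (x t) (v t).toNNReal y + g y := by
            rw [abs_of_nonneg hfn, abs_of_nonneg hgn]
        _ ≤ C * rexp (-(1 / (8 * V)) * y ^ 2) + g y := by
            rw [hCdef]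
            exact add_le_add hf le_rfl
    · refine Integrable.add ?_ (integrable_gaussianPDFReal 0 V.toNNReal)
      exact (integrable_exp_neg_mul_sq (by positivity : (0:ℝ) < 1 / (8 * V))).const_mul C
    · refine ae_of_all _ fun y => ?_
      have := ((pdf_tendsto hVpos hvpos hx0 hvV y).sub (tendsto_const_nhds (x := g y))).abs
      simpa [hgdef] using this
  refine squeeze_zero (fun t => dTV_nonneg _ _) (fun t => ?_) hL1
  exact dTV_le_L1 (x t) 0 (v t) V (hvpos t) hVpos
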